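/- Let λ be a dominant coweight of SL_n with 0 < λ ≤ n·ϖ_1, write λ = Σ λ_j ϖ_{j*} = Σ m_i α_{i*}, let v be the partition 1^{λ_{n-1}} 2^{λ_{n-2}} ⋯ (n-1)^{λ_1} of n, and let u = v^T be the conjugate partition with parts u_1 ≥ u_2 ≥ ⋯. Then for all 1 ≤ i ≤ n−1, m_{n-i} = u_1 + u_2 + ⋯ + u_i − i. -/

import Mathlib

/-- The `i`-th fundamental coweight `ϖ_i` of `SL_n`, as a vector in `ℚ^n`. -/
def varpi (n i : ℕ) : Fin n → ℚ :=
  fun j => if (j : ℕ) < i then 1 - (i : ℚ) / n else -((i : ℚ) / n)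

/-- The `j`-th simple coroot `α_j = e_j - e_{j+1}` of `SL_n` (1-based `j`). -/
def alphaC (n j : ℕ) : Fin n → ℚ :=
  fun x => (if (x : ℕ) = j - 1 then 1 else 0) - (if (x : ℕ) = j then 1 else 0)

open Finset

lemma sum_fin_ite (n k : ℕ) (hk : k ≤ n) (g : ℕ → ℚ) :
    (∑ x : Fin n, if (x : ℕ) < k then g x else 0) = ∑ x ∈ range k, g x := by
  rw [Fin.sum_univ_eq_sum_range (fun x => if x < k then g x else 0) n]
  rw [range_eq_Ico, ← Finset.sum_Ico_consecutive _ (Nat.zero_le k) hk]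
  have h2 : ∑ x ∈ Ico k n, (if x < k then g x else 0) = 0 := by
    apply Finset.sum_eq_zero
    intro x hx
    rw [Finset.mem_Ico] at hx
    rw [if_neg (Nat.not_lt.mpr hx.1)]
  rw [h2, add_zero]
  rw [range_eq_Ico]
  apply Finset.sum_congr rfl
  intro x hx
  rw [Finset.mem_Ico] at hx
  rw [if_pos hx.2]

lemma fvarpi (n k i : ℕ) (hk : k ≤ n) :
    (∑ x : Fin n, if (x : ℕ) < k then varpi n i x else 0)
      = (min k i : ℚ) - (k : ℚ) * ((i : ℚ) / n) := by
  simp only [varpi]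
  rw [sum_fin_ite n k hk (fun y => if y < i then 1 - (i:ℚ)/n else -((i:ℚ)/n))]
  have : ∀ y ∈ range k, (if y < i then 1 - (i:ℚ)/n else -((i:ℚ)/n))
      = (if y < i then (1:ℚ) else 0) - (i:ℚ)/n := by
    intro y _; split <;> ring
  rw [Finset.sum_congr rfl this, Finset.sum_sub_distrib, Finset.sum_boole, Finset.sum_const,
    card_range]
  congr 1
  · have : (range k).filter (fun y => y < i) = range (min k i) := by
      ext y; simp [Finset.mem_filter, Finset.mem_range, Nat.lt_min]
    rw [this, card_range]
    push_cast [Nat.cast_min]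
    rfl

lemma falpha (n k j : ℕ) (hk : k ≤ n) :
    (∑ x : Fin n, if (x : ℕ) < k then alphaC n j x else 0)
      = (if j - 1 < k then (1:ℚ) else 0) - (if j < k then 1 else 0) := by
  simp only [alphaC]
  rw [sum_fin_ite n k hk
    (fun y => (if y = j - 1 then (1:ℚ) else 0) - (if y = j then 1 else 0))]
  rw [Finset.sum_sub_distrib]
  rw [Finset.sum_ite_eq' (range k) (j-1) (fun _ => (1:ℚ)),
    Finset.sum_ite_eq' (range k) j (fun _ => (1:ℚ))]
  simp [Finset.mem_range]

lemma F_sum (n k : ℕ) (s : Finset ℕ) (g : ℕ → ℚ) (w : ℕ → Fin n → ℚ) :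
    (∑ x : Fin n, if (x : ℕ) < k then (∑ j ∈ s, g j • w j) x else 0)
      = ∑ j ∈ s, g j * (∑ x : Fin n, if (x : ℕ) < k then w j x else 0) := by
  simp only [Finset.sum_apply, Pi.smul_apply, smul_eq_mul]
  have h1 : ∀ x : Fin n, (if (x:ℕ) < k then (∑ j ∈ s, g j * w j x) else 0)
      = ∑ j ∈ s, (if (x:ℕ) < k then g j * w j x else 0) := by
    intro x; split <;> simp
  rw [Finset.sum_congr rfl (fun x _ => h1 x), Finset.sum_comm]
  apply Finset.sum_congr rfl
  intro j _
  rw [Finset.mul_sum]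
  apply Finset.sum_congr rfl
  intro x _
  split <;> simp

lemma comb (n i : ℕ) (lam : ℕ → ℕ) (hn : 1 ≤ n) :
    ∑ r ∈ Icc 1 i, ∑ j ∈ Icc r (n-1), lam (n-j)
      = ∑ j ∈ Icc 1 (n-1), min i (n-j) * lam j := by
  have step1 : ∀ r ∈ Icc 1 i, ∑ j ∈ Icc r (n-1), lam (n-j)
      = ∑ j ∈ Icc 1 (n-1), if r ≤ j then lam (n-j) else 0 := by
    intro r hr
    rw [Finset.mem_Icc] at hr
    rw [Finset.sum_ite, Finset.sum_const_zero, add_zero]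
    apply Finset.sum_congr
    · ext j; simp only [Finset.mem_filter, Finset.mem_Icc]; omega
    · intros; rfl
  rw [Finset.sum_congr rfl step1, Finset.sum_comm]
  have step2 : ∀ j ∈ Icc 1 (n-1),
      (∑ r ∈ Icc 1 i, if r ≤ j then lam (n-j) else 0) = min i j * lam (n-j) := by
    intro j hj
    rw [Finset.sum_ite, Finset.sum_const_zero, add_zero, Finset.sum_const]
    have : (Icc 1 i).filter (fun r => r ≤ j) = Icc 1 (min i j) := by
      ext r; simp only [Finset.mem_filter, Finset.mem_Icc]; omega
    rw [this, Nat.card_Icc, smul_eq_mul, Nat.add_sub_cancel]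
  rw [Finset.sum_congr rfl step2]
  apply Finset.sum_nbij' (fun j => n - j) (fun j => n - j)
  · intro j hj; rw [Finset.mem_Icc] at *; omega
  · intro j hj; rw [Finset.mem_Icc] at *; omega
  · intro j hj; rw [Finset.mem_Icc] at hj; omega
  · intro j hj; rw [Finset.mem_Icc] at hj; omega
  · intro j hj; rw [Finset.mem_Icc] at hj
    have : n - (n - j) = j := by omega
    rw [this]

/-- Let `λ = ∑_j λ_j ϖ_{j*} = ∑_i m_i α_{i*}` be a dominant coweight of `SL_n` with
`0 < λ ≤ n ϖ_1`, let `v = 1^{λ_{n-1}} ⋯ (n-1)^{λ_1}` be the associated partition of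
`n`, and let `u = vᵀ` be the conjugate partition, so `u_r = ∑_{j ≥ r} λ_{n-j}`.
Then for `1 ≤ i ≤ n-1` one has `m_{n-i} = u_1 + ⋯ + u_i - i`. -/
theorem m_eq_conjugate_partial_sums (n : ℕ) (hn : 2 ≤ n) (lam m : ℕ → ℕ)
    (hne : (∑ j ∈ Finset.Icc 1 (n - 1), (lam j : ℚ) • varpi n (n - j)) ≠ 0)
    (hle : ∃ c : ℕ → ℕ,
      (n : ℚ) • varpi n 1 - ∑ j ∈ Finset.Icc 1 (n - 1), (lam j : ℚ) • varpi n (n - j) =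
        ∑ j ∈ Finset.Icc 1 (n - 1), (c j : ℚ) • alphaC n j)
    (hm : (∑ j ∈ Finset.Icc 1 (n - 1), (lam j : ℚ) • varpi n (n - j)) =
        ∑ i ∈ Finset.Icc 1 (n - 1), (m i : ℚ) • alphaC n (n - i)) :
    ∀ i, 1 ≤ i → i ≤ n - 1 →
      m (n - i) + i =
        ∑ r ∈ Finset.Icc 1 i, ∑ j ∈ Finset.Icc r (n - 1), lam (n - j) := by
  have hn0 : (n : ℚ) ≠ 0 := Nat.cast_ne_zero.mpr (by omega)
  set T : ℚ := ∑ j ∈ Finset.Icc 1 (n-1), (lam j : ℚ) * ((n - j : ℕ) : ℚ) with hT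
  -- the key identity coming from `hm`, via partial sums of coordinates
  have key : ∀ k, 1 ≤ k → k ≤ n - 1 →
      (∑ j ∈ Finset.Icc 1 (n-1), (lam j : ℚ) * ((min k (n-j) : ℕ) : ℚ))
        - (k : ℚ) * T / n = m (n-k) := by
    intro k hk1 hk2
    have hkn : k ≤ n := by omega
    have h := congrArg
      (fun w : Fin n → ℚ => ∑ x : Fin n, if (x:ℕ) < k then w x else 0) hm
    rw [F_sum, F_sum] at h
    have hL : ∀ j ∈ Finset.Icc 1 (n-1),
        (lam j : ℚ) * (∑ x : Fin n, if (x:ℕ) < k then varpi n (n-j) x else 0)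
        = (lam j : ℚ) * (((min k (n-j) : ℕ) : ℚ)
            - (k:ℚ) * (((n-j:ℕ)):ℚ) / n) := by
      intro j hj
      rw [fvarpi n k (n-j) hkn]
      push_cast
      ring
    have hR : ∀ i ∈ Finset.Icc 1 (n-1),
        (m i : ℚ) * (∑ x : Fin n, if (x:ℕ) < k then alphaC n (n-i) x else 0)
        = (m i : ℚ) * ((if n-i-1 < k then (1:ℚ) else 0)
            - (if n-i < k then 1 else 0)) := by
      intro i hi
      rw [falpha n k (n-i) hkn]
    rw [Finset.sum_congr rfl hL, Finset.sum_congr rfl hR] at h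
    have hR2 : (∑ i ∈ Finset.Icc 1 (n-1), (m i:ℚ) *
        ((if n-i-1 < k then (1:ℚ) else 0) - (if n-i < k then 1 else 0)))
        = m (n-k) := by
      rw [Finset.sum_eq_single_of_mem (n-k) (by rw [Finset.mem_Icc]; omega)]
      · have h1 : n-(n-k)-1 < k := by omega
        have h2 : ¬ (n-(n-k) < k) := by omega
        rw [if_pos h1, if_neg h2]; ring
      · intro b hb hbne
        rw [Finset.mem_Icc] at hb
        have hiff : (n-b-1 < k) ↔ (n-b < k) := by omega
        by_cases hc : n - b < k
        · rw [if_pos (hiff.mpr hc), if_pos hc]; ring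
        · rw [if_neg (fun hh => hc (hiff.mp hh)), if_neg hc]; ring
    rw [hR2] at h
    rw [← h]
    have expand : ∀ j ∈ Finset.Icc 1 (n-1),
        (lam j:ℚ) * (((min k (n-j):ℕ):ℚ) - (k:ℚ) * (((n-j:ℕ)):ℚ)/n)
        = (lam j:ℚ) * ((min k (n-j):ℕ):ℚ)
            - (k:ℚ) * ((lam j:ℚ) * (((n-j:ℕ)):ℚ)) / n := by
      intro j _; ring
    rw [Finset.sum_congr rfl expand, Finset.sum_sub_distrib]
    congr 1
    rw [hT, Finset.mul_sum, Finset.sum_div]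
  -- T/n = m 1
  have hmin : ∀ j ∈ Finset.Icc 1 (n-1), min (n-1) (n-j) = n - j := by
    intro j hj; rw [Finset.mem_Icc] at hj; omega
  have hTm1 : T - (↑(n-1) : ℚ) * T / n = m 1 := by
    have h := key (n-1) (by omega) le_rfl
    have : n - (n-1) = 1 := by omega
    rw [this] at h
    rw [← h, hT]
    congr 1
    apply Finset.sum_congr rfl
    intro j hj
    rw [hmin j hj]
  -- from hle : 1 - T/n = c (n-1)
  obtain ⟨c, hc⟩ := hle
  have hc' : (n : ℚ) • varpi n 1 =
      (∑ j ∈ Finset.Icc 1 (n - 1), (c j : ℚ) • alphaC n j) +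
      ∑ j ∈ Finset.Icc 1 (n - 1), (lam j : ℚ) • varpi n (n - j) :=
    sub_eq_iff_eq_add.mp hc
  have hF1 := congrArg
    (fun w : Fin n → ℚ => ∑ x : Fin n, if (x:ℕ) < n-1 then w x else 0) hc'
  have hA : (∑ x : Fin n, if (x:ℕ) < n-1 then ((n:ℚ) • varpi n 1) x else 0)
      = 1 := by
    have hsplit : ∀ x : Fin n, (if (x:ℕ) < n-1 then ((n:ℚ) • varpi n 1) x else 0)
        = (n:ℚ) * (if (x:ℕ) < n-1 then varpi n 1 x else 0) := by
      intro x; simp only [Pi.smul_apply, smul_eq_mul]; split <;> simp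
    rw [Finset.sum_congr rfl (fun x _ => hsplit x), ← Finset.mul_sum,
      fvarpi n (n-1) 1 (by omega)]
    have h1 : min ((n-1:ℕ):ℚ) ((1:ℕ):ℚ) = 1 := by
      rw [min_eq_right (by exact_mod_cast (by omega : (1:ℕ) ≤ n-1))]
      norm_num
    rw [h1, Nat.cast_sub (by omega : 1 ≤ n)]
    push_cast
    field_simp
    ring
  have hsum : (∑ x : Fin n, if (x:ℕ) < n-1 then
      ((∑ j ∈ Finset.Icc 1 (n - 1), (c j : ℚ) • alphaC n j) +
        ∑ j ∈ Finset.Icc 1 (n - 1), (lam j : ℚ) • varpi n (n - j)) x else 0)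
      = (∑ x : Fin n, if (x:ℕ) < n-1 then
          (∑ j ∈ Finset.Icc 1 (n - 1), (c j : ℚ) • alphaC n j) x else 0)
        + ∑ x : Fin n, if (x:ℕ) < n-1 then
          (∑ j ∈ Finset.Icc 1 (n - 1), (lam j : ℚ) • varpi n (n - j)) x else 0 := by
    have hx : ∀ x : Fin n, (if (x:ℕ) < n-1 then
        ((∑ j ∈ Finset.Icc 1 (n - 1), (c j : ℚ) • alphaC n j) +
          ∑ j ∈ Finset.Icc 1 (n - 1), (lam j : ℚ) • varpi n (n - j)) x else 0)
        = (if (x:ℕ) < n-1 then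
            (∑ j ∈ Finset.Icc 1 (n - 1), (c j : ℚ) • alphaC n j) x else 0)
          + (if (x:ℕ) < n-1 then
            (∑ j ∈ Finset.Icc 1 (n - 1), (lam j : ℚ) • varpi n (n - j)) x else 0) := by
      intro x; simp only [Pi.add_apply]; split <;> simp
    rw [Finset.sum_congr rfl (fun x _ => hx x), Finset.sum_add_distrib]
  rw [hA, hsum, F_sum, F_sum] at hF1
  -- compute the alphaC part: equals c (n-1)
  have hCpart : (∑ j ∈ Finset.Icc 1 (n-1), (c j : ℚ) *
      (∑ x : Fin n, if (x:ℕ) < n-1 then alphaC n j x else 0)) = c (n-1) := by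
    have hrw : ∀ j ∈ Finset.Icc 1 (n-1), (c j : ℚ) *
        (∑ x : Fin n, if (x:ℕ) < n-1 then alphaC n j x else 0)
        = (c j : ℚ) * ((if j-1 < n-1 then (1:ℚ) else 0)
            - (if j < n-1 then 1 else 0)) := by
      intro j _; rw [falpha n (n-1) j (by omega)]
    rw [Finset.sum_congr rfl hrw]
    rw [Finset.sum_eq_single_of_mem (n-1) (by rw [Finset.mem_Icc]; omega)]
    · rw [if_pos (by omega : n-1-1 < n-1), if_neg (by omega : ¬ (n-1 < n-1))]
      ring
    · intro b hb hbne
      rw [Finset.mem_Icc] at hb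
      rw [if_pos (by omega : b-1 < n-1), if_pos (by omega : b < n-1)]
      ring
  -- compute the varpi part: equals T - (n-1)T/n
  have hVpart : (∑ j ∈ Finset.Icc 1 (n-1), (lam j : ℚ) *
      (∑ x : Fin n, if (x:ℕ) < n-1 then varpi n (n-j) x else 0))
      = T - (↑(n-1) : ℚ) * T / n := by
    have hrw : ∀ j ∈ Finset.Icc 1 (n-1), (lam j : ℚ) *
        (∑ x : Fin n, if (x:ℕ) < n-1 then varpi n (n-j) x else 0)
        = (lam j:ℚ) * (((n-j:ℕ):ℚ)) - (↑(n-1):ℚ) * ((lam j:ℚ) * ((n-j:ℕ):ℚ)) / n := by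
      intro j hj
      rw [Finset.mem_Icc] at hj
      rw [fvarpi n (n-1) (n-j) (by omega),
        min_eq_right (by exact_mod_cast (by omega : n - j ≤ n - 1) :
          ((n-j:ℕ):ℚ) ≤ ((n-1:ℕ):ℚ))]
      ring
    rw [Finset.sum_congr rfl hrw, Finset.sum_sub_distrib]
    congr 1
    rw [hT, Finset.mul_sum, Finset.sum_div]
  rw [hCpart, hVpart, hTm1] at hF1
  -- hF1 : 1 = c (n-1) + m 1
  have hF1' : (1 : ℕ) = c (n-1) + m 1 := by exact_mod_cast hF1
  -- T > 0
  have hTpos : 0 < T := by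
    by_contra hnot
    push_neg at hnot
    obtain ⟨j0, hj0, hj0ne⟩ : ∃ j0 ∈ Finset.Icc 1 (n-1), lam j0 ≠ 0 := by
      by_contra hall
      push_neg at hall
      exact hne (Finset.sum_eq_zero (fun j hj => by rw [hall j hj]; simp))
    rw [Finset.mem_Icc] at hj0
    have hterm : (1:ℚ) ≤ (lam j0 : ℚ) * ((n - j0 : ℕ) : ℚ) := by
      have h1 : (1:ℚ) ≤ (lam j0 : ℚ) := by exact_mod_cast Nat.one_le_iff_ne_zero.mpr hj0ne
      have h2 : (1:ℚ) ≤ ((n - j0 : ℕ) : ℚ) := by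
        have : 1 ≤ n - j0 := by omega
        exact_mod_cast this
      nlinarith
    have hge : (1:ℚ) ≤ T := by
      rw [hT]
      calc (1:ℚ) ≤ (lam j0 : ℚ) * ((n - j0 : ℕ) : ℚ) := hterm
        _ ≤ _ := Finset.single_le_sum (f := fun j => (lam j : ℚ) * ((n - j : ℕ) : ℚ))
            (fun j _ => by positivity) (Finset.mem_Icc.mpr (by omega))
    linarith
  have hcastn1 : ((n-1:ℕ):ℚ) = (n:ℚ) - 1 := by
    push_cast [Nat.cast_sub (by omega : 1 ≤ n)]; ring
  have hTn : T = (n:ℚ) * m 1 := by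
    rw [hcastn1] at hTm1
    field_simp at hTm1
    linarith
  have hm1ne : m 1 ≠ 0 := by
    intro h
    rw [h] at hTn
    simp at hTn
    rw [hTn] at hTpos
    exact lt_irrefl 0 hTpos
  have hm1 : m 1 = 1 := by omega
  have hTn' : T = (n:ℚ) := by rw [hTn, hm1]; simp
  -- conclude
  intro i hi1 hi2
  have hk := key i hi1 hi2
  rw [hTn'] at hk
  have hdiv : (i:ℚ) * (n:ℚ) / n = (i:ℚ) := by field_simp
  rw [hdiv] at hk
  rw [comb n i lam (by omega)]
  have hk2 : (((m (n - i) + i : ℕ)) : ℚ)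
      = ((∑ j ∈ Finset.Icc 1 (n-1), min i (n-j) * lam j : ℕ) : ℚ) := by
    push_cast
    push_cast at hk
    have hcomm : (∑ j ∈ Finset.Icc 1 (n-1), min (i:ℚ) ((n-j:ℕ):ℚ) * (lam j:ℚ))
        = ∑ j ∈ Finset.Icc 1 (n-1), (lam j:ℚ) * min (i:ℚ) ((n-j:ℕ):ℚ) :=
      Finset.sum_congr rfl (fun _ _ => mul_comm _ _)
    rw [hcomm]
    linarith
  exact_mod_cast hk2
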